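/- Let q be an odd prime power, and for each monic irreducible P of F_q[t] of odd degree define h_P(x) = log(N(P))·x/(N(P) − x) for x ∈ {−1, 0, 1}, where N(P) = q^(deg P). Then for every real α and every ε > 0 there exists a choice (x_P) ∈ {−1,0,1}^{P odd degree} such that the series ∑_P h_P(x_P) converges and |∑_P h_P(x_P) − α| < ε. -/

import Mathlib

open Polynomial


lemma aux_dvd_of_pow_sub_one_dvd {q d n : ℕ} (hq : 2 ≤ q) (hd : 0 < d)
    (h : q ^ d - 1 ∣ q ^ n - 1) : d ∣ n := by
  rcases eq_or_lt_of_le (show 1 ≤ d from hd) with h1 | hd2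
  · exact (by omega : d = 1) ▸ one_dvd n
  set m := q ^ d - 1 with hm
  have hqd : 2 ≤ q ^ d := le_trans hq (Nat.le_self_pow hd.ne' q)
  have hm1 : 1 ≤ m := by omega
  have hcast : ∀ k : ℕ, ((q : ZMod m)) ^ k = 1 ↔ m ∣ q ^ k - 1 := by
    intro k
    have h1k : 1 ≤ q ^ k := Nat.one_le_pow _ _ (by omega)
    rw [show ((q : ZMod m)) ^ k = ((q ^ k : ℕ) : ZMod m) by push_cast; ring]
    constructor
    · intro hh
      have : (((q ^ k - 1 : ℕ)) : ZMod m) = 0 := by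
        have : ((q ^ k - 1 : ℕ) : ZMod m) = ((q ^ k : ℕ) : ZMod m) - 1 := by
          push_cast [Nat.cast_sub h1k]; ring
        rw [this, hh, sub_self]
      exact (ZMod.natCast_eq_zero_iff _ _).mp this
    · intro hh
      have : (((q ^ k - 1 : ℕ)) : ZMod m) = 0 := (ZMod.natCast_eq_zero_iff _ _).mpr hh
      have h2 : ((q ^ k - 1 : ℕ) : ZMod m) = ((q ^ k : ℕ) : ZMod m) - 1 := by
        push_cast [Nat.cast_sub h1k]; ring
      rw [h2] at this
      linear_combination this
  have hqd1 : ((q : ZMod m)) ^ d = 1 := (hcast d).mpr dvd_rfl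
  have hqn1 : ((q : ZMod m)) ^ n = 1 := (hcast n).mpr h
  set e := orderOf ((q : ZMod m)) with he
  have hed : e ∣ d := orderOf_dvd_of_pow_eq_one hqd1
  have hepos : 0 < e := by
    have : IsOfFinOrder ((q : ZMod m)) := isOfFinOrder_iff_pow_eq_one.mpr ⟨d, hd, hqd1⟩
    exact this.orderOf_pos
  have hqe1 : ((q : ZMod m)) ^ e = 1 := pow_orderOf_eq_one _
  have hmqe : m ∣ q ^ e - 1 := (hcast e).mp hqe1
  have hqe2 : 2 ≤ q ^ e := le_trans hq (Nat.le_self_pow hepos.ne' q)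
  have : m ≤ q ^ e - 1 := Nat.le_of_dvd (by omega) hmqe
  have : q ^ d ≤ q ^ e := by omega
  have hde : d ≤ e := (Nat.pow_le_pow_iff_right (by omega)).mp this
  have : e = d := le_antisymm (Nat.le_of_dvd hd hed) hde
  exact this ▸ orderOf_dvd_of_pow_eq_one hqn1

lemma aux_deg_dvd {F : Type} [Field F] [Fintype F] (n : ℕ) (hn : 0 < n)
    {P : F[X]} (hPm : P.Monic) (hPi : Irreducible P)
    (hdvd : P ∣ (X ^ (Fintype.card F) ^ n - X)) : P.natDegree ∣ n := by
  classical
  set q := Fintype.card F with hq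
  have hq2 : 2 ≤ q := Fintype.one_lt_card
  set d := P.natDegree with hd
  have hdpos : 0 < d := hPi.natDegree_pos
  haveI : Fact (Irreducible P) := ⟨hPi⟩
  set L := AdjoinRoot P with hL
  have pb := AdjoinRoot.powerBasis (f := P) hPm.ne_zero
  haveI : Module.Finite F L := pb.finite
  haveI : Fintype L := Module.fintypeOfFintype pb.basis
  have hcardL : Fintype.card L = q ^ d := by
    rw [Module.card_fintype (AdjoinRoot.powerBasis (f := P) hPm.ne_zero).basis,
      Fintype.card_fin, AdjoinRoot.powerBasis_dim hPm.ne_zero]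
  -- char p
  set p := ringChar F with hp
  haveI : CharP F p := ringChar.charP F
  have hpprime : p.Prime := CharP.char_is_prime F p
  haveI : Fact p.Prime := ⟨hpprime⟩
  haveI : CharP L p := charP_of_injective_algebraMap (algebraMap F L).injective p
  haveI : ExpChar L p := ExpChar.prime hpprime
  obtain ⟨k, hk⟩ := FiniteField.card F p
  have hqpk : q = p ^ (k : ℕ) := hk.2
  -- root satisfies α ^ q^n = α
  set α := AdjoinRoot.root P with hα
  have hroot : α ^ q ^ n = α := by
    obtain ⟨g, hg⟩ := hdvd
    have h0 : ((X : F[X]) ^ q ^ n - X).eval₂ (AdjoinRoot.of P) α = 0 := by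
      rw [hg, eval₂_mul, AdjoinRoot.eval₂_root, zero_mul]
    simpa [eval₂_sub, eval₂_pow, eval₂_X, sub_eq_zero] using h0
  -- x ↦ x ^ q ^ n is an F-algebra endomorphism of L
  have hqn : q ^ n = p ^ ((k : ℕ) * n) := by rw [hqpk, ← pow_mul]
  set φ := iterateFrobenius L p ((k : ℕ) * n) with hφ
  have hφdef : ∀ x : L, φ x = x ^ q ^ n := fun x => by
    rw [hφ, iterateFrobenius_def, hqn]
  have hcomm : ∀ c : F, φ (algebraMap F L c) = algebraMap F L c := fun c => by
    rw [hφdef, ← map_pow, FiniteField.pow_card_pow]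
  set ψ : L →ₐ[F] L := { toRingHom := φ, commutes' := hcomm } with hψ
  have hψid : ψ = AlgHom.id F L := by
    apply AdjoinRoot.algHom_ext
    show φ α = α
    rw [hφdef, hroot]
  have hall : ∀ x : L, x ^ q ^ n = x := fun x => by
    have := congrArg (fun f : L →ₐ[F] L => f x) hψid
    simpa [hψ, hφdef] using this
  -- cyclic units
  obtain ⟨g, hg⟩ := IsCyclic.exists_generator (α := Lˣ)
  have horder : orderOf g = q ^ d - 1 := by
    rw [orderOf_eq_card_of_forall_mem_zpowers hg, Nat.card_eq_fintype_card, Fintype.card_units, hcardL]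
  have hgpow : g ^ (q ^ n - 1) = 1 := by
    have h1 : (g : L) ^ q ^ n = (g : L) := hall g
    have h2 : g ^ q ^ n = g := Units.ext (by push_cast [Units.val_pow_eq_pow_val]; exact h1)
    have hq1 : 1 ≤ q ^ n := Nat.one_le_pow _ _ (by omega)
    have : g ^ (q ^ n - 1) * g = g := by
      rw [← pow_succ, Nat.sub_add_cancel hq1, h2]
    exact mul_right_cancel (this.trans (one_mul g).symm)
  have hdvd1 : q ^ d - 1 ∣ q ^ n - 1 := horder ▸ orderOf_dvd_of_pow_eq_one hgpow
  exact aux_dvd_of_pow_sub_one_dvd hq2 hdpos hdvd1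


lemma aux_count {F : Type} [Field F] [Fintype F] {ℓ : ℕ} (hℓ : ℓ.Prime) (hℓ2 : 2 < ℓ) :
    ∃ s : Finset F[X], (∀ P ∈ s, P.Monic ∧ Irreducible P ∧ P.natDegree = ℓ) ∧
      Fintype.card F ^ ℓ ≤ s.card * ℓ + Fintype.card F := by
  classical
  set q := Fintype.card F with hqdef
  have hq2 : 2 ≤ q := Fintype.one_lt_card
  set f : F[X] := X ^ q ^ ℓ - X with hf
  have hf0 : f ≠ 0 := FiniteField.X_pow_card_pow_sub_X_ne_zero F hℓ.pos.ne' hq2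
  have hdeg : f.natDegree = q ^ ℓ :=
    FiniteField.X_pow_card_pow_sub_X_natDegree_eq F hℓ.pos.ne' hq2
  -- separable, hence squarefree
  set p := ringChar F with hp
  haveI : CharP F p := ringChar.charP F
  obtain ⟨k, hk⟩ := FiniteField.card F p
  have hpq : p ∣ q ^ ℓ := by
    refine dvd_trans ?_ (dvd_pow_self q hℓ.pos.ne')
    rw [hqdef, hk.2]
    exact dvd_pow_self p k.pos.ne'
  have hsep : f.Separable := galois_poly_separable p (q ^ ℓ) hpq
  have hsq : Squarefree f := hsep.squarefree
  set M := UniqueFactorizationMonoid.normalizedFactors f with hM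
  have hnodup : M.Nodup :=
    (UniqueFactorizationMonoid.squarefree_iff_nodup_normalizedFactors hf0).mp hsq
  have hmem : ∀ g ∈ M, g.Monic ∧ Irreducible g ∧ (g.natDegree = 1 ∨ g.natDegree = ℓ) := by
    intro g hg
    have hirr : Irreducible g := UniqueFactorizationMonoid.irreducible_of_normalized_factor g hg
    have hg0 : g ≠ 0 := hirr.ne_zero
    have hmon : g.Monic := by
      have := Polynomial.monic_normalize hg0
      rwa [UniqueFactorizationMonoid.normalize_normalized_factor g hg] at this
    have hdvd : g ∣ f := UniqueFactorizationMonoid.dvd_of_mem_normalizedFactors hg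
    have := aux_deg_dvd ℓ hℓ.pos hmon hirr hdvd
    exact ⟨hmon, hirr, (Nat.Prime.eq_one_or_self_of_dvd hℓ _ this)⟩
  have hM0 : (0 : F[X]) ∉ M := fun h => (hmem 0 h).2.1.ne_zero rfl
  -- sum of degrees
  have hassoc := UniqueFactorizationMonoid.prod_normalizedFactors hf0
  obtain ⟨u, hu⟩ := hassoc
  have hprod0 : M.prod ≠ 0 := Multiset.prod_ne_zero hM0
  have hsum : (M.map natDegree).sum = q ^ ℓ := by
    have h1 : f.natDegree = M.prod.natDegree + natDegree (u : F[X]) := by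
      rw [← hu, natDegree_mul hprod0 (Units.ne_zero u)]
    rw [natDegree_eq_zero_of_isUnit u.isUnit, add_zero] at h1
    rw [← Polynomial.natDegree_multiset_prod _ hM0, ← h1, hdeg]
  -- pass to Finset
  set S := M.toFinset with hS
  have hSval : S.val = M := by rw [hS, Multiset.toFinset_val, hnodup.dedup]
  have hsumS : ∑ g ∈ S, g.natDegree = q ^ ℓ := by
    rw [Finset.sum, hSval]; exact hsum
  set s := S.filter (fun g => g.natDegree = ℓ) with hs
  set s1 := S.filter (fun g => ¬ g.natDegree = ℓ) with hs1
  have hsplit : ∑ g ∈ s, g.natDegree + ∑ g ∈ s1, g.natDegree = q ^ ℓ := by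
    rw [Finset.sum_filter_add_sum_filter_not S _ _, hsumS]
  have hsdeg : ∑ g ∈ s, g.natDegree = s.card * ℓ := by
    rw [Finset.sum_congr rfl (fun g hg => (Finset.mem_filter.mp hg).2),
      Finset.sum_const, smul_eq_mul]
  have hs1deg : ∑ g ∈ s1, g.natDegree = s1.card := by
    rw [Finset.sum_congr rfl (fun g hg => ?_), Finset.sum_const, smul_eq_mul, mul_one]
    obtain ⟨hgS, hgne⟩ := Finset.mem_filter.mp hg
    rcases (hmem g (Multiset.mem_toFinset.mp hgS)).2.2 with h | h
    · exact h
    · exact absurd h hgne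
  -- s1.card ≤ q
  have hs1card : s1.card ≤ q := by
    have hinj : Set.InjOn (fun g : F[X] => g.coeff 0) s1 := by
      intro a ha b hb hab
      obtain ⟨haS, hane⟩ := Finset.mem_filter.mp ha
      obtain ⟨hbS, hbne⟩ := Finset.mem_filter.mp hb
      obtain ⟨ham, _, had⟩ := hmem a (Multiset.mem_toFinset.mp haS)
      obtain ⟨hbm, _, hbd⟩ := hmem b (Multiset.mem_toFinset.mp hbS)
      have ha1 : a.natDegree = 1 := had.resolve_right hane
      have hb1 : b.natDegree = 1 := hbd.resolve_right hbne
      have hab' : a.coeff 0 = b.coeff 0 := hab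
      rw [ham.eq_X_add_C ha1, hbm.eq_X_add_C hb1, hab']
    calc s1.card ≤ Finset.univ.card (α := F) :=
          Finset.card_le_card_of_injOn _ (fun _ _ => Finset.mem_univ _) hinj
    _ = q := Finset.card_univ
  refine ⟨s, fun P hP => ?_, by omega⟩
  obtain ⟨hPS, hPd⟩ := Finset.mem_filter.mp hP
  obtain ⟨h1, h2, _⟩ := hmem P (Multiset.mem_toFinset.mp hPS)
  exact ⟨h1, h2, hPd⟩


lemma aux_sq_lt (n : ℕ) : n ^ 2 < 3 ^ n := by
  induction n with
  | zero => norm_num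
  | succ n ih =>
    have h1 : n ^ 2 + 1 ≤ 3 ^ n := ih
    have h2 : (n + 1) ^ 2 < 3 * (n ^ 2 + 1) := by nlinarith
    calc (n + 1) ^ 2 < 3 * (n ^ 2 + 1) := h2
    _ ≤ 3 * 3 ^ n := by omega
    _ = 3 ^ (n + 1) := by ring

lemma aux_greedy {ι : Type*} [DecidableEq ι] (v : ι → ℝ) (ε t : ℝ) (ht : 0 ≤ t)
    (s : Finset ι) (hs : ∀ i ∈ s, 0 < v i ∧ v i < ε) :
    ∃ u : Finset ι, u ⊆ s ∧ (∑ i ∈ u, v i) ≤ t ∧ (t - ε < ∑ i ∈ u, v i ∨ u = s) := by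
  revert hs
  induction s using Finset.induction_on with
  | empty =>
    intro _
    exact ⟨∅, Finset.Subset.refl _, by simpa using ht, Or.inr rfl⟩
  | @insert a s' ha ih =>
    intro hs
    obtain ⟨u, husub, hule, hud⟩ := ih (fun i hi => hs i (Finset.mem_insert_of_mem hi))
    rcases hud with h | heq
    · exact ⟨u, husub.trans (Finset.subset_insert a s'), hule, Or.inl h⟩
    · subst heq
      by_cases hc : (∑ i ∈ u, v i) + v a ≤ t
      · refine ⟨insert a u, Finset.Subset.refl _, ?_, ?_⟩
        · rw [Finset.sum_insert ha]; linarith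
        · by_cases hc2 : t - ε < ∑ i ∈ insert a u, v i
          · exact Or.inl hc2
          · exact Or.inr rfl
      · refine ⟨u, Finset.subset_insert a u, hule, Or.inl ?_⟩
        have hva : v a < ε := (hs a (Finset.mem_insert_self a u)).2
        linarith [not_le.mp hc]

set_option maxHeartbeats 2000000 in
lemma aux_choice {F : Type} [Field F] [Fintype F] (q : ℕ) (hq : Fintype.card F = q)
    (hq3 : 3 ≤ q) (ε t : ℝ) (hε : 0 < ε) (ht0 : 0 ≤ t) (σr : ℝ) (hσr1 : σr = 1 ∨ σr = -1) :
    ∃ U : Finset {P : F[X] // P.Monic ∧ Irreducible P ∧ Odd P.natDegree},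
      (∑ i ∈ U, ((i.1.natDegree : ℝ) * Real.log q) / ((q : ℝ) ^ i.1.natDegree - σr)) ≤ t ∧
      t - ε < ∑ i ∈ U, ((i.1.natDegree : ℝ) * Real.log q) / ((q : ℝ) ^ i.1.natDegree - σr) := by
  classical
  have hq1R : (1 : ℝ) < (q : ℝ) := by exact_mod_cast (by omega : 1 < q)
  have hq3R : (3 : ℝ) ≤ (q : ℝ) := by exact_mod_cast hq3
  set Lq := Real.log q with hLq
  have hL : 0 < Lq := Real.log_pos hq1R
  have hσabs : -1 ≤ σr ∧ σr ≤ 1 := by rcases hσr1 with h | h <;> rw [h] <;> norm_num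
  set v : {P : F[X] // P.Monic ∧ Irreducible P ∧ Odd P.natDegree} → ℝ :=
    fun i => ((i.1.natDegree : ℝ) * Lq) / ((q : ℝ) ^ i.1.natDegree - σr) with hv
  have hblock : ∀ D : ℕ, ∃ s : Finset {P : F[X] // P.Monic ∧ Irreducible P ∧ Odd P.natDegree},
      (∀ i ∈ s, D < i.1.natDegree) ∧ (∀ i ∈ s, 0 < v i ∧ v i < ε) ∧
      Lq / 2 ≤ ∑ i ∈ s, v i := by
    intro D
    obtain ⟨ℓ, hℓge, hℓp⟩ := Nat.exists_infinite_primes (max D (Nat.ceil (Lq / ε)) + 3)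
    have hℓD : D < ℓ := by have := le_max_left D (Nat.ceil (Lq / ε)); omega
    have hℓ3 : 3 ≤ ℓ := by omega
    have hℓodd : Odd ℓ := hℓp.odd_of_ne_two (by omega)
    have hℓR : (3 : ℝ) ≤ (ℓ : ℝ) := by exact_mod_cast hℓ3
    -- q^ℓ bounds
    have hsq : (ℓ : ℕ) ^ 2 < q ^ ℓ :=
      lt_of_lt_of_le (aux_sq_lt ℓ) (Nat.pow_le_pow_left hq3 ℓ)
    have hsqR : (ℓ : ℝ) ^ 2 ≤ (q : ℝ) ^ ℓ := by exact_mod_cast hsq.le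
    have hNbig : 2 * q + 1 ≤ q ^ ℓ := by
      calc 2 * q + 1 ≤ 3 * q := by omega
      _ ≤ q * q := Nat.mul_le_mul_right q hq3
      _ ≤ q ^ ℓ := by
          calc q * q = q ^ 2 := by ring
          _ ≤ q ^ ℓ := Nat.pow_le_pow_right (by omega) (by omega)
    have hNbigR : 2 * (q : ℝ) + 1 ≤ (q : ℝ) ^ ℓ := by exact_mod_cast hNbig
    have hden1 : (0 : ℝ) < (q : ℝ) ^ ℓ - 1 := by nlinarith
    have hqq : (0 : ℝ) < (q : ℝ) := by linarith
    -- smallness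
    have hceil : Lq / ε ≤ (Nat.ceil (Lq / ε) : ℝ) := Nat.le_ceil _
    have hℓbig : Lq / ε + 2 ≤ (ℓ : ℝ) - 1 := by
      have h1 : (Nat.ceil (Lq / ε) + 3 : ℕ) ≤ ℓ := by
        have := le_max_right D (Nat.ceil (Lq / ε)); omega
      have h2 : ((Nat.ceil (Lq / ε) : ℝ) + 3) ≤ (ℓ : ℝ) := by exact_mod_cast h1
      linarith
    have hLdiv : ε * (Lq / ε) = Lq := by field_simp
    have hLqε : Lq < ε * ((ℓ : ℝ) - 1) := by
      nlinarith [mul_le_mul_of_nonneg_left hℓbig hε.le]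
    have hA2 : (ℓ : ℝ) * ((ℓ : ℝ) - 1) ≤ (q : ℝ) ^ ℓ - 1 := by nlinarith
    have hsmall : (ℓ : ℝ) * Lq / ((q : ℝ) ^ ℓ - 1) < ε := by
      rw [div_lt_iff₀ hden1]
      nlinarith [mul_lt_mul_of_pos_left hLqε (by linarith : (0:ℝ) < (ℓ:ℝ)),
        mul_le_mul_of_nonneg_left hA2 hε.le]
    -- the finset
    obtain ⟨s0, hs0mem, hs0card⟩ := aux_count (F := F) hℓp (by omega)
    rw [hq] at hs0card
    have hmemι : ∀ g ∈ s0, g.Monic ∧ Irreducible g ∧ Odd g.natDegree := fun g hg =>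
      ⟨(hs0mem g hg).1, (hs0mem g hg).2.1, (hs0mem g hg).2.2 ▸ hℓodd⟩
    set e : {g // g ∈ s0} → {P : F[X] // P.Monic ∧ Irreducible P ∧ Odd P.natDegree} :=
      fun g => ⟨g.1, hmemι g.1 g.2⟩ with he
    have heinj : Function.Injective e := by
      intro a b hab
      have h1 : (e a).1 = (e b).1 := congrArg Subtype.val hab
      exact Subtype.ext h1
    refine ⟨s0.attach.map ⟨e, heinj⟩, ?_, ?_, ?_⟩
    · intro i hi
      obtain ⟨g, _, hgi⟩ := Finset.mem_map.mp hi
      have : i.1.natDegree = ℓ := by rw [← hgi]; exact (hs0mem g.1 g.2).2.2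
      omega
    · intro i hi
      obtain ⟨g, _, hgi⟩ := Finset.mem_map.mp hi
      have hdeg : i.1.natDegree = ℓ := by rw [← hgi]; exact (hs0mem g.1 g.2).2.2
      have hvi : v i = (ℓ : ℝ) * Lq / ((q : ℝ) ^ ℓ - σr) := by rw [hv]; simp [hdeg]
      have hdenσ : (0 : ℝ) < (q : ℝ) ^ ℓ - σr := by
        have := hσabs.2; nlinarith
      constructor
      · rw [hvi]
        exact div_pos (by nlinarith) hdenσ
      · rw [hvi]
        calc (ℓ : ℝ) * Lq / ((q : ℝ) ^ ℓ - σr) ≤ (ℓ : ℝ) * Lq / ((q : ℝ) ^ ℓ - 1) := by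
              apply div_le_div_of_nonneg_left (by nlinarith) hden1
              have := hσabs.1; linarith
        _ < ε := hsmall
    · -- sum bound
      have hsum : ∑ i ∈ s0.attach.map ⟨e, heinj⟩, v i
          = (s0.card : ℝ) * ((ℓ : ℝ) * Lq / ((q : ℝ) ^ ℓ - σr)) := by
        rw [Finset.sum_map]
        simp only [Function.Embedding.coeFn_mk]
        have : ∀ g ∈ s0.attach, v (e g) = (ℓ : ℝ) * Lq / ((q : ℝ) ^ ℓ - σr) := by
          intro g _
          have hdeg : (e g).1.natDegree = ℓ := (hs0mem g.1 g.2).2.2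
          rw [hv]; simp [hdeg]
        rw [Finset.sum_congr rfl this, Finset.sum_const, Finset.card_attach, nsmul_eq_mul]
      rw [hsum]
      have hcard : (q : ℝ) ^ ℓ - (q : ℝ) ≤ (s0.card : ℝ) * (ℓ : ℝ) := by
        have h5 : ((q ^ ℓ : ℕ) : ℝ) ≤ ((s0.card * ℓ + q : ℕ) : ℝ) := by exact_mod_cast hs0card
        push_cast at h5; linarith
      have hdenσ : (0 : ℝ) < (q : ℝ) ^ ℓ - σr := by
        have := hσabs.2; nlinarith
      have hdenub : (q : ℝ) ^ ℓ - σr ≤ (q : ℝ) ^ ℓ + 1 := by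
        have := hσabs.1; linarith
      rw [show (s0.card : ℝ) * ((ℓ : ℝ) * Lq / ((q : ℝ) ^ ℓ - σr))
          = ((s0.card : ℝ) * (ℓ : ℝ)) * Lq / ((q : ℝ) ^ ℓ - σr) from by ring,
        le_div_iff₀ hdenσ]
      nlinarith [mul_le_mul_of_nonneg_right hcard hL.le,
        mul_le_mul_of_nonneg_left (show (q : ℝ) ^ ℓ - σr ≤ 2 * ((q : ℝ) ^ ℓ - (q : ℝ)) from by nlinarith)
          (show (0:ℝ) ≤ Lq / 2 from by linarith)]
  -- multi-block greedy
  have hc2 : (0:ℝ) < Lq / 2 := by linarith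
  have hmain : ∀ n : ℕ, ∃ U : Finset {P : F[X] // P.Monic ∧ Irreducible P ∧ Odd P.natDegree},
      (∑ i ∈ U, v i) ≤ t ∧ (t - ε < ∑ i ∈ U, v i ∨ (n : ℝ) * (Lq / 2) ≤ ∑ i ∈ U, v i) := by
    intro n
    induction n with
    | zero => exact ⟨∅, by simpa using ht0, Or.inr (by simp)⟩
    | succ n ih =>
      obtain ⟨U, hUle, hUd⟩ := ih
      rcases hUd with hdone | hlow
      · exact ⟨U, hUle, Or.inl hdone⟩
      · obtain ⟨s, hsD, hsv, hssum⟩ := hblock (U.sup (fun i => i.1.natDegree))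
        have hdisj : Disjoint U s := by
          rw [Finset.disjoint_left]
          intro i hiU his
          exact absurd (Finset.le_sup (f := fun i => i.1.natDegree) hiU)
            (not_le.mpr (hsD i his))
        obtain ⟨u, hus, hule, hud⟩ := aux_greedy v ε (t - ∑ i ∈ U, v i) (by linarith) s hsv
        refine ⟨U ∪ u, ?_, ?_⟩
        · rw [Finset.sum_union (hdisj.mono_right hus)]; linarith
        · rw [Finset.sum_union (hdisj.mono_right hus)]
          rcases hud with h | heq
          · exact Or.inl (by linarith)
          · refine Or.inr ?_
            rw [heq]
            push_cast
            nlinarith [hssum]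
  obtain ⟨n, hn⟩ := exists_nat_gt (t / (Lq / 2))
  have hnt : t < (n : ℝ) * (Lq / 2) := by
    rw [div_lt_iff₀ hc2] at hn; linarith
  obtain ⟨U, hUle, hUd⟩ := hmain n
  have hSlow : t - ε < ∑ i ∈ U, v i := by
    rcases hUd with h | h
    · exact h
    · linarith
  exact ⟨U, hUle, hSlow⟩

/-- Over a finite field with an odd number `q` of elements, for each monic
irreducible `P` of odd degree and `x ∈ {-1,0,1}` set
`h_P(x) = log(N(P))·x/(N(P) − x)` with `N(P) = q^(deg P)`. Then for every real
`α` and `ε > 0` there is a choice `(x_P)` with values in `{-1,0,1}` such that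
`∑_P h_P(x_P)` converges and `|∑_P h_P(x_P) − α| < ε`. -/
theorem stmt_15 (F : Type) [Field F] [Fintype F] (q : ℕ) (hq : Fintype.card F = q)
    (hodd : Odd q) (α : ℝ) (ε : ℝ) (hε : 0 < ε) :
    ∃ x : {P : F[X] // P.Monic ∧ Irreducible P ∧ Odd P.natDegree} → ℤ,
      (∀ P, x P ∈ ({-1, 0, 1} : Set ℤ)) ∧
      Summable (fun P : {P : F[X] // P.Monic ∧ Irreducible P ∧ Odd P.natDegree} =>
        Real.log ((q : ℝ) ^ P.1.natDegree) * (x P : ℝ) / ((q : ℝ) ^ P.1.natDegree - (x P : ℝ))) ∧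
      |(∑' P : {P : F[X] // P.Monic ∧ Irreducible P ∧ Odd P.natDegree},
          Real.log ((q : ℝ) ^ P.1.natDegree) * (x P : ℝ) / ((q : ℝ) ^ P.1.natDegree - (x P : ℝ)))
        - α| < ε := by
  classical
  have hq3 : 3 ≤ q := by
    have h2 : 2 ≤ q := hq ▸ Fintype.one_lt_card
    rcases hodd with ⟨k, hk⟩; omega
  set σ : ℤ := if 0 ≤ α then 1 else -1 with hσ
  have hσ1 : σ = 1 ∨ σ = -1 := by rw [hσ]; split <;> simp
  set σr : ℝ := (σ : ℝ) with hσr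
  have hσr1 : σr = 1 ∨ σr = -1 := by
    rcases hσ1 with h | h <;> rw [hσr, h] <;> simp
  set t := |α| with ht
  have ht0 : 0 ≤ t := abs_nonneg α
  obtain ⟨U, hUle, hSlow⟩ := aux_choice q hq hq3 ε t hε ht0 σr hσr1
  refine ⟨fun i => if i ∈ U then σ else 0, ?_, ?_, ?_⟩
  · intro P
    by_cases hP : P ∈ U <;> rcases hσ1 with h | h <;>
      simp [hP, h, Set.mem_insert_iff]
  · apply summable_of_ne_finset_zero (s := U)
    intro i hi
    simp [if_neg hi]
  · have hzero : ∀ i ∉ U, Real.log ((q : ℝ) ^ i.1.natDegree)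
        * (((if i ∈ U then σ else 0) : ℤ) : ℝ)
        / ((q : ℝ) ^ i.1.natDegree - (((if i ∈ U then σ else 0) : ℤ) : ℝ)) = 0 := by
      intro i hi
      simp [if_neg hi]
    rw [tsum_eq_sum hzero]
    have hterm : ∀ i ∈ U, Real.log ((q : ℝ) ^ i.1.natDegree)
        * (((if i ∈ U then σ else 0) : ℤ) : ℝ)
        / ((q : ℝ) ^ i.1.natDegree - (((if i ∈ U then σ else 0) : ℤ) : ℝ))
        = σr * (((i.1.natDegree : ℝ) * Real.log q) / ((q : ℝ) ^ i.1.natDegree - σr)) := by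
      intro i hi
      rw [if_pos hi, Real.log_pow]
      show (i.1.natDegree : ℝ) * Real.log q * σr / ((q : ℝ) ^ i.1.natDegree - σr)
        = σr * ((i.1.natDegree : ℝ) * Real.log q / ((q : ℝ) ^ i.1.natDegree - σr))
      ring
    rw [Finset.sum_congr rfl hterm, ← Finset.mul_sum]
    by_cases h0 : 0 ≤ α
    · have hσr' : σr = 1 := by rw [hσr, hσ, if_pos h0]; norm_num
      have ht' : t = α := abs_of_nonneg h0
      rw [hσr'] at hUle hSlow
      rw [hσr', one_mul, abs_lt]
      constructor <;> linarith
    · have hσr' : σr = -1 := by rw [hσr, hσ, if_neg h0]; norm_num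
      have ht' : t = -α := abs_of_neg (not_le.mp h0)
      rw [hσr'] at hUle hSlow
      rw [hσr', abs_lt]
      constructor <;> linarith
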